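/- If E[e^{tX_1}] < ∞ for some t > 0, then for any positive sequence a_n with a_n/n^{1/2} → ∞ and a_n/n → 0, one has P[S_n > nμ + a_n] = exp( −(a_n²/(2σ²n))·(1 + o(1)) ) and P[S_n < nμ − a_n] = exp( −(a_n²/(2σ²n))·(1 + o(1)) ) as n → ∞. -/

import Mathlib

set_option linter.unusedSectionVars false
set_option linter.unusedVariables false
set_option maxHeartbeats 1000000

open MeasureTheory ProbabilityTheory Filter Topology Real

namespace CramerAux

variable {Ω : Type*} [MeasureSpace Ω] [IsProbabilityMeasure (ℙ : Measure Ω)]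

noncomputable def M1 (Y : Ω → ℝ) (s : ℝ) : ℝ := ∫ ω, Y ω * Real.exp (s * Y ω) ∂ℙ
noncomputable def M2 (Y : Ω → ℝ) (s : ℝ) : ℝ := ∫ ω, Y ω ^ 2 * Real.exp (s * Y ω) ∂ℙ
noncomputable def tm (Y : Ω → ℝ) (s : ℝ) : ℝ := M1 Y s / mgf Y ℙ s
noncomputable def tv (Y : Ω → ℝ) (s : ℝ) : ℝ := M2 Y s / mgf Y ℙ s - (tm Y s) ^ 2

def pS (X : ℕ → Ω → ℝ) (n : ℕ) (ω : Ω) : ℝ := ∑ i ∈ Finset.range n, X i ω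

lemma meas_S {X : ℕ → Ω → ℝ} (hX : ∀ i, Measurable (X i)) (n : ℕ) : Measurable (pS X n) := by
  unfold pS
  exact Finset.measurable_sum _ fun i _ => hX i


/-- pointwise bound: x ≤ (4/t) exp(t/4 x) for x ≥ 0 -/
lemma le_exp_quarter {t : ℝ} (ht : 0 < t) {x : ℝ} (hx : 0 ≤ x) :
    x ≤ 4 / t * Real.exp (t / 4 * x) := by
  have h := Real.add_one_le_exp (t / 4 * x)
  have h2 : t / 4 * x ≤ Real.exp (t / 4 * x) := by nlinarith [mul_nonneg (le_of_lt (by positivity : (0:ℝ) < t/4)) hx]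
  calc x = 4 / t * (t / 4 * x) := by field_simp
    _ ≤ 4 / t * Real.exp (t / 4 * x) := by
        apply mul_le_mul_of_nonneg_left h2 (by positivity)

lemma bound0 {t s x : ℝ} (hs : s ≤ t) (hx : 0 ≤ x) :
    Real.exp (s * x) ≤ Real.exp (t * x) :=
  Real.exp_le_exp.mpr (mul_le_mul_of_nonneg_right hs hx)

lemma bound1 {t s x : ℝ} (ht : 0 < t) (hs : s ≤ 3 * t / 4) (hx : 0 ≤ x) :
    x * Real.exp (s * x) ≤ 4 / t * Real.exp (t * x) := by
  calc x * Real.exp (s * x) ≤ (4 / t * Real.exp (t / 4 * x)) * Real.exp (3 * t / 4 * x) := by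
        apply mul_le_mul (le_exp_quarter ht hx) (bound0 hs hx) (Real.exp_pos _).le
        positivity
    _ = 4 / t * Real.exp (t * x) := by
        rw [mul_assoc, ← Real.exp_add]; ring_nf

lemma bound2 {t s x : ℝ} (ht : 0 < t) (hs : s ≤ t / 2) (hx : 0 ≤ x) :
    x ^ 2 * Real.exp (s * x) ≤ 16 / t ^ 2 * Real.exp (t * x) := by
  have h1 : x ≤ 4 / t * Real.exp (t / 4 * x) := le_exp_quarter ht hx
  have h2 : x ^ 2 ≤ 16 / t ^ 2 * Real.exp (t / 2 * x) := by
    have := mul_le_mul h1 h1 hx (by positivity)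
    calc x ^ 2 = x * x := sq x
      _ ≤ (4 / t * Real.exp (t / 4 * x)) * (4 / t * Real.exp (t / 4 * x)) := this
      _ = 16 / t ^ 2 * Real.exp (t / 2 * x) := by
          rw [show (4 / t * Real.exp (t / 4 * x)) * (4 / t * Real.exp (t / 4 * x))
              = (4/t) * (4/t) * (Real.exp (t/4*x) * Real.exp (t/4*x)) by ring, ← Real.exp_add]
          ring_nf
  calc x ^ 2 * Real.exp (s * x) ≤ (16 / t ^ 2 * Real.exp (t / 2 * x)) * Real.exp (t / 2 * x) := by
        apply mul_le_mul h2 (bound0 hs hx) (Real.exp_pos _).le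
        positivity
    _ = 16 / t ^ 2 * Real.exp (t * x) := by
        rw [mul_assoc, ← Real.exp_add]; ring_nf


variable {Y : Ω → ℝ} {t : ℝ}

section integrability

variable (hY : Measurable Y) (hpos : 0 ≤ᵐ[ℙ] Y) (ht : 0 < t)
  (hexp : Integrable (fun ω => Real.exp (t * Y ω)) ℙ)

include hY hpos ht hexp

lemma int_exp' {s : ℝ} (hs : s ≤ t) : Integrable (fun ω => Real.exp (s * Y ω)) ℙ := by
  refine Integrable.mono hexp ((hY.const_mul s).exp.aestronglyMeasurable) ?_
  filter_upwards [hpos] with ω hω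
  rw [Real.norm_eq_abs, Real.norm_eq_abs, abs_of_pos (Real.exp_pos _),
    abs_of_pos (Real.exp_pos _)]
  exact bound0 hs hω

lemma int_mul_exp' {s : ℝ} (hs : s ≤ 3 * t / 4) :
    Integrable (fun ω => Y ω * Real.exp (s * Y ω)) ℙ := by
  refine Integrable.mono (hexp.const_mul (4 / t))
    ((hY.mul (hY.const_mul s).exp).aestronglyMeasurable) ?_
  filter_upwards [hpos] with ω hω
  rw [Real.norm_eq_abs, Real.norm_eq_abs,
    abs_of_nonneg (mul_nonneg hω (Real.exp_pos _).le),
    abs_of_nonneg (by positivity : (0:ℝ) ≤ 4 / t * Real.exp (t * Y ω))]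
  exact bound1 ht hs hω

lemma int_sq_exp' {s : ℝ} (hs : s ≤ t / 2) :
    Integrable (fun ω => Y ω ^ 2 * Real.exp (s * Y ω)) ℙ := by
  refine Integrable.mono (hexp.const_mul (16 / t ^ 2))
    (((hY.pow_const 2).mul (hY.const_mul s).exp).aestronglyMeasurable) ?_
  filter_upwards [hpos] with ω hω
  rw [Real.norm_eq_abs, Real.norm_eq_abs,
    abs_of_nonneg (mul_nonneg (sq_nonneg _) (Real.exp_pos _).le),
    abs_of_nonneg (by positivity : (0:ℝ) ≤ 16 / t ^ 2 * Real.exp (t * Y ω))]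
  exact bound2 ht hs hω

end integrability

section single

variable (hY : Measurable Y) (hpos : 0 ≤ᵐ[ℙ] Y) (ht : 0 < t)
  (hexp : Integrable (fun ω => Real.exp (t * Y ω)) ℙ)

omit ht in
omit hY hpos hexp in
lemma M1_zero : M1 Y 0 = ∫ ω, Y ω ∂ℙ := by
  show (∫ ω, Y ω * Real.exp (0 * Y ω) ∂ℙ) = _
  simp

omit hY hpos hexp in
lemma M2_zero : M2 Y 0 = ∫ ω, Y ω ^ 2 ∂ℙ := by
  show (∫ ω, Y ω ^ 2 * Real.exp (0 * Y ω) ∂ℙ) = _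
  simp

omit hY hpos hexp in
lemma tm_zero : tm Y 0 = ∫ ω, Y ω ∂ℙ := by
  rw [tm, M1_zero, mgf_zero]
  simp

include hY hpos ht hexp

lemma hasDerivAt_mgf {s : ℝ} (hs : |s| < t / 4) :
    HasDerivAt (fun u => mgf Y ℙ u) (M1 Y s) s := by
  have key := hasDerivAt_integral_of_dominated_loc_of_deriv_le
    (F := fun u ω => Real.exp (u * Y ω)) (F' := fun u ω => Y ω * Real.exp (u * Y ω))
    (μ := ℙ) (x₀ := s) (bound := fun ω => 4 / t * Real.exp (t * Y ω))
    (Metric.ball_mem_nhds s (by positivity : (0:ℝ) < t / 4))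
    (Eventually.of_forall fun u => ((hY.const_mul u).exp.aestronglyMeasurable))
    (int_exp' hY hpos ht hexp (by cases abs_lt.mp hs; linarith))
    ((hY.mul (hY.const_mul s).exp).aestronglyMeasurable)
    ?_ (hexp.const_mul _) ?_
  · exact key.2
  · filter_upwards [hpos] with ω hω
    intro u hu
    rw [Metric.mem_ball, Real.dist_eq] at hu
    rw [Real.norm_eq_abs, abs_of_nonneg (mul_nonneg hω (Real.exp_pos _).le)]
    have : u ≤ 3 * t / 4 := by
      cases abs_lt.mp hs; cases abs_lt.mp hu; linarith [abs_lt.mp hu]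
    exact bound1 ht this hω
  · filter_upwards with ω
    intro u _
    have : HasDerivAt (fun u : ℝ => u * Y ω) (Y ω) u := by
      simpa using (hasDerivAt_id u).mul_const (Y ω)
    simpa [mul_comm] using this.exp

lemma hasDerivAt_M1 {s : ℝ} (hs : |s| < t / 4) :
    HasDerivAt (fun u => M1 Y u) (M2 Y s) s := by
  have key := hasDerivAt_integral_of_dominated_loc_of_deriv_le
    (F := fun u ω => Y ω * Real.exp (u * Y ω)) (F' := fun u ω => Y ω ^ 2 * Real.exp (u * Y ω))
    (μ := ℙ) (x₀ := s) (bound := fun ω => 16 / t ^ 2 * Real.exp (t * Y ω))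
    (Metric.ball_mem_nhds s (by positivity : (0:ℝ) < t / 4))
    (Eventually.of_forall fun u => (hY.mul (hY.const_mul u).exp).aestronglyMeasurable)
    (int_mul_exp' hY hpos ht hexp (by cases abs_lt.mp hs; linarith))
    (((hY.pow_const 2).mul (hY.const_mul s).exp).aestronglyMeasurable)
    ?_ (hexp.const_mul _) ?_
  · exact key.2
  · filter_upwards [hpos] with ω hω
    intro u hu
    rw [Metric.mem_ball, Real.dist_eq] at hu
    rw [Real.norm_eq_abs, abs_of_nonneg (mul_nonneg (sq_nonneg _) (Real.exp_pos _).le)]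
    have : u ≤ t / 2 := by
      cases abs_lt.mp hs; cases abs_lt.mp hu; linarith [abs_lt.mp hu]
    exact bound2 ht this hω
  · filter_upwards with ω
    intro u _
    have h1 : HasDerivAt (fun u : ℝ => u * Y ω) (Y ω) u := by
      simpa using (hasDerivAt_id u).mul_const (Y ω)
    have h2 := (h1.exp).const_mul (Y ω)
    refine h2.congr_deriv ?_
    ring

lemma tendsto_M2 : Tendsto (fun s => M2 Y s) (𝓝 0) (𝓝 (M2 Y 0)) := by
  apply tendsto_integral_filter_of_dominated_convergence
    (fun ω => 16 / t ^ 2 * Real.exp (t * Y ω))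
  · exact Eventually.of_forall fun u =>
      ((hY.pow_const 2).mul (hY.const_mul u).exp).aestronglyMeasurable
  · have hmem : ∀ᶠ s : ℝ in 𝓝 0, s ≤ t / 2 := by
      have : Set.Iio (t/2) ∈ 𝓝 (0:ℝ) := Iio_mem_nhds (by positivity)
      filter_upwards [this] with s hs using le_of_lt hs
    filter_upwards [hmem] with s hs
    filter_upwards [hpos] with ω hω
    rw [Real.norm_eq_abs, abs_of_nonneg (mul_nonneg (sq_nonneg _) (Real.exp_pos _).le)]
    exact bound2 ht hs hω
  · exact hexp.const_mul _
  · filter_upwards with ω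
    have : Continuous (fun s : ℝ => Y ω ^ 2 * Real.exp (s * Y ω)) := by
      continuity
    exact this.tendsto 0


lemma mgf_pos' {s : ℝ} (hs : s ≤ t) : 0 < mgf Y ℙ s :=
  mgf_pos (int_exp' hY hpos ht hexp hs)

lemma hasDerivAt_tm {s : ℝ} (hs : |s| < t / 4) :
    HasDerivAt (fun u => tm Y u) (tv Y s) s := by
  have hM := hasDerivAt_mgf hY hpos ht hexp hs
  have hM1 := hasDerivAt_M1 hY hpos ht hexp hs
  have hMpos : 0 < mgf Y ℙ s := mgf_pos' hY hpos ht hexp (by cases abs_lt.mp hs; linarith)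
  have := hM1.div hM hMpos.ne'
  refine this.congr_deriv ?_
  unfold tv tm
  field_simp

lemma hasDerivAt_cgf {s : ℝ} (hs : |s| < t / 4) :
    HasDerivAt (fun u => Real.log (mgf Y ℙ u)) (tm Y s) s := by
  have hM := hasDerivAt_mgf hY hpos ht hexp hs
  have hMpos : 0 < mgf Y ℙ s := mgf_pos' hY hpos ht hexp (by cases abs_lt.mp hs; linarith)
  exact hM.log hMpos.ne'

lemma memLp_two : MemLp Y 2 ℙ := by
  have h2 : Integrable (fun ω => Y ω ^ 2) ℙ := by
    have := int_sq_exp' hY hpos ht hexp (le_of_lt (by positivity : (0:ℝ) < t / 2))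
    simpa using this
  exact (memLp_two_iff_integrable_sq hY.aestronglyMeasurable).mpr h2

lemma tv_zero : tv Y 0 = variance Y ℙ := by
  rw [variance_eq_sub (memLp_two hY hpos ht hexp)]
  rw [tv, M2_zero, tm_zero, mgf_zero]
  simp only [div_one]
  rfl

lemma tendsto_tv : Tendsto (fun s => tv Y s) (𝓝 0) (𝓝 (variance Y ℙ)) := by
  rw [← tv_zero hY hpos ht hexp]
  have hM : ContinuousAt (fun u => mgf Y ℙ u) 0 :=
    (hasDerivAt_mgf hY hpos ht hexp (by simpa using (by positivity : (0:ℝ) < t/4))).continuousAt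
  have hM1 : ContinuousAt (fun u => M1 Y u) 0 :=
    (hasDerivAt_M1 hY hpos ht hexp (by simpa using (by positivity : (0:ℝ) < t/4))).continuousAt
  have hM2 : ContinuousAt (fun u => M2 Y u) 0 := tendsto_M2 hY hpos ht hexp
  have hne : mgf Y ℙ 0 ≠ 0 := by
    rw [mgf_zero]; norm_num
  exact ((hM2.div hM hne).sub ((hM1.div hM hne).pow 2))

/-- ε-δ form of `tv → v`. -/
lemma tv_bound {ε : ℝ} (hε : 0 < ε) :
    ∃ δ : ℝ, 0 < δ ∧ δ < t / 4 ∧ ∀ s : ℝ, |s| ≤ δ → |tv Y s - variance Y ℙ| ≤ ε := by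
  have := Metric.tendsto_nhds_nhds.mp (tendsto_tv hY hpos ht hexp) ε hε
  obtain ⟨δ', hδ'pos, hδ'⟩ := this
  refine ⟨min (δ' / 2) (t / 8), by positivity, ?_, ?_⟩
  · calc min (δ' / 2) (t / 8) ≤ t / 8 := min_le_right _ _
      _ < t / 4 := by linarith
  · intro s hs
    have h1 : dist s 0 < δ' := by
      rw [Real.dist_eq, sub_zero]
      calc |s| ≤ min (δ' / 2) (t / 8) := hs
        _ ≤ δ' / 2 := min_le_left _ _
        _ < δ' := by linarith
    have := hδ' h1
    rw [Real.dist_eq] at this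
    exact this.le

/-- ε-δ form of first-order expansion of tilted mean. -/
lemma tm_bound {ε : ℝ} (hε : 0 < ε) :
    ∃ δ : ℝ, 0 < δ ∧ δ < t / 4 ∧ ∀ s : ℝ, |s| ≤ δ →
      |tm Y s - ∫ ω, Y ω ∂ℙ - variance Y ℙ * s| ≤ ε * |s| := by
  have hd : HasDerivAt (fun u => tm Y u) (variance Y ℙ) 0 := by
    have := hasDerivAt_tm hY hpos ht hexp (s := 0) (by simpa using (by positivity : (0:ℝ) < t/4))
    rwa [tv_zero hY hpos ht hexp] at this
  have hlo := (hasDerivAt_iff_isLittleO.mp hd).bound hε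
  rw [Metric.eventually_nhds_iff] at hlo
  obtain ⟨δ', hδ'pos, hδ'⟩ := hlo
  refine ⟨min (δ' / 2) (t / 8), by positivity, ?_, ?_⟩
  · calc min (δ' / 2) (t / 8) ≤ t / 8 := min_le_right _ _
      _ < t / 4 := by linarith
  · intro s hs
    have h1 : dist s 0 < δ' := by
      rw [Real.dist_eq, sub_zero]
      calc |s| ≤ min (δ' / 2) (t / 8) := hs
        _ ≤ δ' / 2 := min_le_left _ _
        _ < δ' := by linarith
    have := hδ' h1
    simp only [tm_zero, sub_zero, smul_eq_mul, Real.norm_eq_abs] at this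
    rw [show tm Y s - (∫ ω, Y ω ∂ℙ) - variance Y ℙ * s
        = tm Y s - (∫ ω, Y ω ∂ℙ) - s * variance Y ℙ by ring]
    exact this

/-- second-order expansion of the cgf. -/
lemma cgf_bound {ε : ℝ} (hε : 0 < ε) :
    ∃ δ : ℝ, 0 < δ ∧ δ < t / 4 ∧ ∀ s : ℝ, |s| ≤ δ →
      |Real.log (mgf Y ℙ s) - (∫ ω, Y ω ∂ℙ) * s - variance Y ℙ * s ^ 2 / 2| ≤ ε * s ^ 2 := by
  obtain ⟨δ, hδpos, hδlt, hδ⟩ := tm_bound hY hpos ht hexp hε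
  refine ⟨δ, hδpos, hδlt, ?_⟩
  intro s hs
  set mu := ∫ ω, Y ω ∂ℙ
  set v := variance Y ℙ
  set g : ℝ → ℝ := fun u => Real.log (mgf Y ℙ u) - mu * u - v * u ^ 2 / 2 with hg
  have hg0 : g 0 = 0 := by simp [hg, mgf_zero]
  have habs : ∀ x ∈ Set.uIcc (0:ℝ) s, |x| ≤ |s| := by
    intro x hx
    rw [Set.uIcc_eq_union] at hx
    rw [abs_le]
    rcases hx with hx | hx <;> rw [Set.mem_Icc] at hx <;>
      constructor <;> linarith [le_abs_self s, neg_abs_le s, abs_nonneg s, hx.1, hx.2]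
  have hgd : ∀ x ∈ Set.uIcc 0 s, HasDerivWithinAt g (tm Y x - mu - v * x) (Set.uIcc 0 s) x := by
    intro x hx
    have hxs : |x| ≤ |s| := habs x hx
    have hxlt : |x| < t / 4 := lt_of_le_of_lt (hxs.trans hs) hδlt
    have h1 : HasDerivAt g (tm Y x - mu - v * x) x := by
      have hc := hasDerivAt_cgf hY hpos ht hexp hxlt
      have h2 : HasDerivAt (fun u : ℝ => mu * u) mu x := by
        simpa using (hasDerivAt_id x).const_mul mu
      have h3 : HasDerivAt (fun u : ℝ => v * u ^ 2 / 2) (v * x) x := by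
        have h := (hasDerivAt_pow 2 x).const_mul (v / 2)
        have heq : (fun u : ℝ => v / 2 * u ^ 2) = fun u : ℝ => v * u ^ 2 / 2 := by
          funext u; ring
        rw [heq] at h
        refine h.congr_deriv ?_
        push_cast
        ring
      exact (hc.sub h2).sub h3
    exact h1.hasDerivWithinAt
  have hbound : ∀ x ∈ Set.uIcc 0 s, ‖tm Y x - mu - v * x‖ ≤ ε * |s| := by
    intro x hx
    have hxs : |x| ≤ |s| := habs x hx
    have := hδ x (hxs.trans hs)
    rw [Real.norm_eq_abs]
    calc |tm Y x - mu - v * x| ≤ ε * |x| := this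
      _ ≤ ε * |s| := by nlinarith
  have key := (convex_uIcc (0:ℝ) s).norm_image_sub_le_of_norm_hasDerivWithin_le
    hgd hbound Set.left_mem_uIcc Set.right_mem_uIcc
  rw [hg0, sub_zero, sub_zero, Real.norm_eq_abs, Real.norm_eq_abs] at key
  calc |Real.log (mgf Y ℙ s) - mu * s - v * s ^ 2 / 2| = |g s| := rfl
    _ ≤ ε * |s| * |s| := key
    _ = ε * s ^ 2 := by rw [mul_assoc, ← abs_mul, ← sq, abs_of_nonneg (sq_nonneg s)]


end single

section sums

variable {X : ℕ → Ω → ℝ} {l : ℝ}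
variable (hX : ∀ i, Measurable (X i))
  (hiid : iIndepFun X ℙ)
  (hid : ∀ i, IdentDistrib (X i) (X 0) ℙ ℙ)
  (hl0 : Integrable (fun ω => Real.exp (l * X 0 ω)) ℙ)
  (hl1 : Integrable (fun ω => X 0 ω * Real.exp (l * X 0 ω)) ℙ)
  (hl2 : Integrable (fun ω => X 0 ω ^ 2 * Real.exp (l * X 0 ω)) ℙ)

section transfer

lemma ident_comp (hid : ∀ i, IdentDistrib (X i) (X 0) ℙ ℙ) (i : ℕ) {φ : ℝ → ℝ}
    (hφ : Measurable φ) :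
    IdentDistrib (fun ω => φ (X i ω)) (fun ω => φ (X 0 ω)) ℙ ℙ :=
  (hid i).comp hφ

include hid hl0 in
lemma int_exp_i (i : ℕ) : Integrable (fun ω => Real.exp (l * X i ω)) ℙ :=
  (ident_comp hid i ((measurable_id.const_mul l).exp)).integrable_iff.mpr hl0

include hid hl0 in
lemma integral_exp_i (i : ℕ) : ∫ ω, Real.exp (l * X i ω) ∂ℙ = mgf (X 0) ℙ l :=
  (ident_comp hid i ((measurable_id.const_mul l).exp)).integral_eq

include hid hl1 in
lemma int_mul_exp_i (i : ℕ) : Integrable (fun ω => X i ω * Real.exp (l * X i ω)) ℙ :=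
  (ident_comp hid i (measurable_id.mul (measurable_id.const_mul l).exp)).integrable_iff.mpr hl1

include hid hl1 in
lemma integral_mul_exp_i (i : ℕ) : ∫ ω, X i ω * Real.exp (l * X i ω) ∂ℙ = M1 (X 0) l :=
  (ident_comp hid i (measurable_id.mul (measurable_id.const_mul l).exp)).integral_eq

include hid hl2 in
lemma int_sq_exp_i (i : ℕ) : Integrable (fun ω => X i ω ^ 2 * Real.exp (l * X i ω)) ℙ :=
  (ident_comp hid i ((measurable_id.pow_const 2).mul
    (measurable_id.const_mul l).exp)).integrable_iff.mpr hl2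

include hid hl2 in
lemma integral_sq_exp_i (i : ℕ) : ∫ ω, X i ω ^ 2 * Real.exp (l * X i ω) ∂ℙ = M2 (X 0) l :=
  (ident_comp hid i ((measurable_id.pow_const 2).mul
    (measurable_id.const_mul l).exp)).integral_eq

end transfer

include hX hiid hid hl0 hl1 hl2

lemma sum_moments (hM : 0 < mgf (X 0) ℙ l) (n : ℕ) :
    (Integrable (fun ω => Real.exp (l * pS X n ω)) ℙ
      ∧ ∫ ω, Real.exp (l * pS X n ω) ∂ℙ = mgf (X 0) ℙ l ^ n)
    ∧ (Integrable (fun ω => pS X n ω * Real.exp (l * pS X n ω)) ℙ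
      ∧ ∫ ω, pS X n ω * Real.exp (l * pS X n ω) ∂ℙ
          = n * tm (X 0) l * mgf (X 0) ℙ l ^ n)
    ∧ (Integrable (fun ω => pS X n ω ^ 2 * Real.exp (l * pS X n ω)) ℙ
      ∧ ∫ ω, pS X n ω ^ 2 * Real.exp (l * pS X n ω) ∂ℙ
          = ((n : ℝ) * (M2 (X 0) l / mgf (X 0) ℙ l)
             + ((n : ℝ) ^ 2 - n) * tm (X 0) l ^ 2) * mgf (X 0) ℙ l ^ n) := by
  set M : ℝ := mgf (X 0) ℙ l with hMdef
  have hM1 : M1 (X 0) l = tm (X 0) l * M := by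
    rw [tm, ← hMdef]; field_simp
  have hM2 : M2 (X 0) l = (M2 (X 0) l / M) * M := by field_simp
  induction n with
  | zero =>
    refine ⟨⟨?_, ?_⟩, ⟨?_, ?_⟩, ⟨?_, ?_⟩⟩ <;>
      simp [pS]
  | succ n ih =>
    obtain ⟨⟨i0, e0⟩, ⟨i1, e1⟩, ⟨i2, e2⟩⟩ := ih
    -- independence of pS X n and X n
    have hind : IndepFun (pS X n) (X n) ℙ := by
      have := hiid.indepFun_finsetSum_of_notMem hX (Finset.notMem_range_self (n := n))
      unfold pS
      convert this using 2
      simp [Finset.sum_apply]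
    -- decomposition
    have hdec : ∀ ω, pS X (n + 1) ω = pS X n ω + X n ω := by
      intro ω; unfold pS; rw [Finset.sum_range_succ]
    have hexpdec : ∀ ω, Real.exp (l * pS X (n+1) ω)
        = Real.exp (l * pS X n ω) * Real.exp (l * X n ω) := by
      intro ω; rw [hdec, mul_add, Real.exp_add]
    -- independent pairs we need, as products φ(pS X n) * ψ(X n)
    have hSm : Measurable (pS X n) := meas_S hX n
    have hind00 : IndepFun (fun ω => Real.exp (l * pS X n ω))
        (fun ω => Real.exp (l * X n ω)) ℙ :=
      hind.comp (measurable_id.const_mul l).exp (measurable_id.const_mul l).exp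
    have hind10 : IndepFun (fun ω => pS X n ω * Real.exp (l * pS X n ω))
        (fun ω => Real.exp (l * X n ω)) ℙ :=
      hind.comp (measurable_id.mul (measurable_id.const_mul l).exp)
        (measurable_id.const_mul l).exp
    have hind01 : IndepFun (fun ω => Real.exp (l * pS X n ω))
        (fun ω => X n ω * Real.exp (l * X n ω)) ℙ :=
      hind.comp (measurable_id.const_mul l).exp
        (measurable_id.mul (measurable_id.const_mul l).exp)
    have hind20 : IndepFun (fun ω => pS X n ω ^ 2 * Real.exp (l * pS X n ω))
        (fun ω => Real.exp (l * X n ω)) ℙ :=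
      hind.comp ((measurable_id.pow_const 2).mul (measurable_id.const_mul l).exp)
        (measurable_id.const_mul l).exp
    have hind11 : IndepFun (fun ω => pS X n ω * Real.exp (l * pS X n ω))
        (fun ω => X n ω * Real.exp (l * X n ω)) ℙ :=
      hind.comp (measurable_id.mul (measurable_id.const_mul l).exp)
        (measurable_id.mul (measurable_id.const_mul l).exp)
    have hind02 : IndepFun (fun ω => Real.exp (l * pS X n ω))
        (fun ω => X n ω ^ 2 * Real.exp (l * X n ω)) ℙ :=
      hind.comp (measurable_id.const_mul l).exp
        ((measurable_id.pow_const 2).mul (measurable_id.const_mul l).exp)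
    -- integrable products
    have j00 : Integrable (fun ω => Real.exp (l * pS X n ω) * Real.exp (l * X n ω)) ℙ :=
      hind00.integrable_mul i0 (int_exp_i hid hl0 n)
    have j10 : Integrable (fun ω => (pS X n ω * Real.exp (l * pS X n ω)) * Real.exp (l * X n ω)) ℙ :=
      hind10.integrable_mul i1 (int_exp_i hid hl0 n)
    have j01 : Integrable (fun ω => Real.exp (l * pS X n ω) * (X n ω * Real.exp (l * X n ω))) ℙ :=
      hind01.integrable_mul i0 (int_mul_exp_i hid hl1 n)
    have j20 : Integrable (fun ω => (pS X n ω ^ 2 * Real.exp (l * pS X n ω)) * Real.exp (l * X n ω)) ℙ :=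
      hind20.integrable_mul i2 (int_exp_i hid hl0 n)
    have j11 : Integrable (fun ω => (pS X n ω * Real.exp (l * pS X n ω)) * (X n ω * Real.exp (l * X n ω))) ℙ :=
      hind11.integrable_mul i1 (int_mul_exp_i hid hl1 n)
    have j02 : Integrable (fun ω => Real.exp (l * pS X n ω) * (X n ω ^ 2 * Real.exp (l * X n ω))) ℙ :=
      hind02.integrable_mul i0 (int_sq_exp_i hid hl2 n)
    -- integrals of products
    have k00 : ∫ ω, Real.exp (l * pS X n ω) * Real.exp (l * X n ω) ∂ℙ
        = (∫ ω, Real.exp (l * pS X n ω) ∂ℙ) * ∫ ω, Real.exp (l * X n ω) ∂ℙ :=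
      hind00.integral_fun_mul_eq_mul_integral i0.aestronglyMeasurable (int_exp_i hid hl0 n).aestronglyMeasurable
    have k10 : ∫ ω, (pS X n ω * Real.exp (l * pS X n ω)) * Real.exp (l * X n ω) ∂ℙ
        = (∫ ω, pS X n ω * Real.exp (l * pS X n ω) ∂ℙ) * ∫ ω, Real.exp (l * X n ω) ∂ℙ :=
      hind10.integral_fun_mul_eq_mul_integral i1.aestronglyMeasurable (int_exp_i hid hl0 n).aestronglyMeasurable
    have k01 : ∫ ω, Real.exp (l * pS X n ω) * (X n ω * Real.exp (l * X n ω)) ∂ℙ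
        = (∫ ω, Real.exp (l * pS X n ω) ∂ℙ) * ∫ ω, X n ω * Real.exp (l * X n ω) ∂ℙ :=
      hind01.integral_fun_mul_eq_mul_integral i0.aestronglyMeasurable (int_mul_exp_i hid hl1 n).aestronglyMeasurable
    have k20 : ∫ ω, (pS X n ω ^ 2 * Real.exp (l * pS X n ω)) * Real.exp (l * X n ω) ∂ℙ
        = (∫ ω, pS X n ω ^ 2 * Real.exp (l * pS X n ω) ∂ℙ) * ∫ ω, Real.exp (l * X n ω) ∂ℙ :=
      hind20.integral_fun_mul_eq_mul_integral i2.aestronglyMeasurable (int_exp_i hid hl0 n).aestronglyMeasurable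
    have k11 : ∫ ω, (pS X n ω * Real.exp (l * pS X n ω)) * (X n ω * Real.exp (l * X n ω)) ∂ℙ
        = (∫ ω, pS X n ω * Real.exp (l * pS X n ω) ∂ℙ) * ∫ ω, X n ω * Real.exp (l * X n ω) ∂ℙ :=
      hind11.integral_fun_mul_eq_mul_integral i1.aestronglyMeasurable (int_mul_exp_i hid hl1 n).aestronglyMeasurable
    have k02 : ∫ ω, Real.exp (l * pS X n ω) * (X n ω ^ 2 * Real.exp (l * X n ω)) ∂ℙ
        = (∫ ω, Real.exp (l * pS X n ω) ∂ℙ) * ∫ ω, X n ω ^ 2 * Real.exp (l * X n ω) ∂ℙ :=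
      hind02.integral_fun_mul_eq_mul_integral i0.aestronglyMeasurable (int_sq_exp_i hid hl2 n).aestronglyMeasurable
    rw [integral_exp_i hid hl0 n] at k00 k10 k20
    rw [integral_mul_exp_i hid hl1 n] at k01 k11
    rw [integral_sq_exp_i hid hl2 n] at k02
    rw [e0] at k00 k01 k02
    rw [e1] at k10 k11
    rw [e2] at k20
    constructor
    · constructor
      · have : (fun ω => Real.exp (l * pS X (n+1) ω))
            = fun ω => Real.exp (l * pS X n ω) * Real.exp (l * X n ω) := by
          funext ω; exact hexpdec ω
        rw [this]; exact j00
      · calc ∫ ω, Real.exp (l * pS X (n+1) ω) ∂ℙ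
            = ∫ ω, Real.exp (l * pS X n ω) * Real.exp (l * X n ω) ∂ℙ := by
              congr 1; funext ω; exact hexpdec ω
          _ = M ^ n * M := k00
          _ = M ^ (n + 1) := by ring
    constructor
    · constructor
      · have : (fun ω => pS X (n+1) ω * Real.exp (l * pS X (n+1) ω))
            = fun ω => (pS X n ω * Real.exp (l * pS X n ω)) * Real.exp (l * X n ω)
                + Real.exp (l * pS X n ω) * (X n ω * Real.exp (l * X n ω)) := by
          funext ω; rw [hexpdec ω, hdec ω]; ring
        rw [this]; exact j10.add j01
      · calc ∫ ω, pS X (n+1) ω * Real.exp (l * pS X (n+1) ω) ∂ℙ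
            = ∫ ω, (pS X n ω * Real.exp (l * pS X n ω)) * Real.exp (l * X n ω)
                + Real.exp (l * pS X n ω) * (X n ω * Real.exp (l * X n ω)) ∂ℙ := by
              congr 1; funext ω; rw [hexpdec ω, hdec ω]; ring
          _ = (↑n * tm (X 0) l * M ^ n) * M + M ^ n * M1 (X 0) l := by
              rw [integral_add j10 j01, k10, k01]
          _ = (↑(n+1) : ℝ) * tm (X 0) l * M ^ (n+1) := by
              rw [hM1]; push_cast; ring
    · constructor
      · have : (fun ω => pS X (n+1) ω ^ 2 * Real.exp (l * pS X (n+1) ω))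
            = fun ω => (pS X n ω ^ 2 * Real.exp (l * pS X n ω)) * Real.exp (l * X n ω)
                + (2 * ((pS X n ω * Real.exp (l * pS X n ω)) * (X n ω * Real.exp (l * X n ω)))
                + Real.exp (l * pS X n ω) * (X n ω ^ 2 * Real.exp (l * X n ω))) := by
          funext ω; rw [hexpdec ω, hdec ω]; ring
        rw [this]
        exact j20.add ((j11.const_mul 2).add j02)
      · calc ∫ ω, pS X (n+1) ω ^ 2 * Real.exp (l * pS X (n+1) ω) ∂ℙ
            = ∫ ω, (pS X n ω ^ 2 * Real.exp (l * pS X n ω)) * Real.exp (l * X n ω)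
                + (2 * ((pS X n ω * Real.exp (l * pS X n ω)) * (X n ω * Real.exp (l * X n ω)))
                + Real.exp (l * pS X n ω) * (X n ω ^ 2 * Real.exp (l * X n ω))) ∂ℙ := by
              congr 1; funext ω; rw [hexpdec ω, hdec ω]; ring
          _ = ((↑n * (M2 (X 0) l / M) + ((n:ℝ)^2 - n) * tm (X 0) l ^ 2) * M ^ n) * M
              + (2 * ((↑n * tm (X 0) l * M ^ n) * M1 (X 0) l)
                + M ^ n * M2 (X 0) l) := by
              have jb : Integrable (fun ω =>
                  2 * ((pS X n ω * Real.exp (l * pS X n ω)) * (X n ω * Real.exp (l * X n ω)))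
                  + Real.exp (l * pS X n ω) * (X n ω ^ 2 * Real.exp (l * X n ω))) ℙ :=
                (j11.const_mul 2).add j02
              have hadd1 : ∫ ω, ((pS X n ω ^ 2 * Real.exp (l * pS X n ω)) * Real.exp (l * X n ω)
                  + (2 * ((pS X n ω * Real.exp (l * pS X n ω)) * (X n ω * Real.exp (l * X n ω)))
                    + Real.exp (l * pS X n ω) * (X n ω ^ 2 * Real.exp (l * X n ω)))) ∂ℙ
                  = (∫ ω, (pS X n ω ^ 2 * Real.exp (l * pS X n ω)) * Real.exp (l * X n ω) ∂ℙ)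
                  + ∫ ω, (2 * ((pS X n ω * Real.exp (l * pS X n ω)) * (X n ω * Real.exp (l * X n ω)))
                    + Real.exp (l * pS X n ω) * (X n ω ^ 2 * Real.exp (l * X n ω))) ∂ℙ :=
                integral_add j20 jb
              have hadd2 : ∫ ω, (2 * ((pS X n ω * Real.exp (l * pS X n ω)) * (X n ω * Real.exp (l * X n ω)))
                    + Real.exp (l * pS X n ω) * (X n ω ^ 2 * Real.exp (l * X n ω))) ∂ℙ
                  = (∫ ω, 2 * ((pS X n ω * Real.exp (l * pS X n ω)) * (X n ω * Real.exp (l * X n ω))) ∂ℙ)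
                  + ∫ ω, Real.exp (l * pS X n ω) * (X n ω ^ 2 * Real.exp (l * X n ω)) ∂ℙ :=
                integral_add (j11.const_mul 2) j02
              rw [hadd1, hadd2, integral_const_mul 2, k20, k11, k02]
          _ = ((↑(n+1) : ℝ) * (M2 (X 0) l / M)
              + ((↑(n+1):ℝ)^2 - (↑(n+1):ℝ)) * tm (X 0) l ^ 2) * M ^ (n+1) := by
              rw [hM1]
              push_cast
              field_simp
              ring

lemma sum_centered (hM : 0 < mgf (X 0) ℙ l) (n : ℕ) :
    Integrable (fun ω => (pS X n ω - n * tm (X 0) l) ^ 2 * Real.exp (l * pS X n ω)) ℙ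
    ∧ ∫ ω, (pS X n ω - n * tm (X 0) l) ^ 2 * Real.exp (l * pS X n ω) ∂ℙ
        = n * tv (X 0) l * mgf (X 0) ℙ l ^ n := by
  obtain ⟨⟨i0, e0⟩, ⟨i1, e1⟩, ⟨i2, e2⟩⟩ := sum_moments hX hiid hid hl0 hl1 hl2 hM n
  set M : ℝ := mgf (X 0) ℙ l
  set m : ℝ := tm (X 0) l
  have hfun : (fun ω => (pS X n ω - n * m) ^ 2 * Real.exp (l * pS X n ω))
      = fun ω => pS X n ω ^ 2 * Real.exp (l * pS X n ω)
         - 2 * (n * m) * (pS X n ω * Real.exp (l * pS X n ω))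
         + (n * m) ^ 2 * Real.exp (l * pS X n ω) := by
    funext ω; ring
  have ia : Integrable (fun ω => 2 * ((n:ℝ) * m) * (pS X n ω * Real.exp (l * pS X n ω))) ℙ :=
    i1.const_mul (2 * ((n:ℝ) * m))
  have ib : Integrable (fun ω => ((n:ℝ) * m) ^ 2 * Real.exp (l * pS X n ω)) ℙ :=
    i0.const_mul (((n:ℝ) * m) ^ 2)
  constructor
  · rw [hfun]
    exact (i2.sub ia).add ib
  · have hadd : ∫ ω, ((pS X n ω ^ 2 * Real.exp (l * pS X n ω)
          - 2 * ((n:ℝ) * m) * (pS X n ω * Real.exp (l * pS X n ω)))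
          + ((n:ℝ) * m) ^ 2 * Real.exp (l * pS X n ω)) ∂ℙ
        = (∫ ω, (pS X n ω ^ 2 * Real.exp (l * pS X n ω)
          - 2 * ((n:ℝ) * m) * (pS X n ω * Real.exp (l * pS X n ω))) ∂ℙ)
        + ∫ ω, ((n:ℝ) * m) ^ 2 * Real.exp (l * pS X n ω) ∂ℙ :=
      integral_add (i2.sub ia) ib
    have hsub : ∫ ω, (pS X n ω ^ 2 * Real.exp (l * pS X n ω)
          - 2 * ((n:ℝ) * m) * (pS X n ω * Real.exp (l * pS X n ω))) ∂ℙ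
        = (∫ ω, pS X n ω ^ 2 * Real.exp (l * pS X n ω) ∂ℙ)
        - ∫ ω, 2 * ((n:ℝ) * m) * (pS X n ω * Real.exp (l * pS X n ω)) ∂ℙ :=
      integral_sub i2 ia
    rw [hfun, hadd, hsub, integral_const_mul, integral_const_mul, e0, e1, e2]
    rw [show tv (X 0) l = M2 (X 0) l / M - m ^ 2 from rfl]
    ring


include hX hiid hid hl0 hl1 hl2 in
theorem tilt_lower_bound (hM : 0 < mgf (X 0) ℙ l) (n : ℕ) {r : ℝ} (hr : 0 < r)
    (A : Set Ω) (hA : MeasurableSet A)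
    (hsub : ∀ ω, |pS X n ω - n * tm (X 0) l| < r → ω ∈ A) :
    Real.exp (n * Real.log (mgf (X 0) ℙ l) - l * (n * tm (X 0) l) - |l| * r)
      * (1 - n * tv (X 0) l / r ^ 2) ≤ (ℙ A).toReal := by
  obtain ⟨⟨i0, e0⟩, _, _⟩ := sum_moments hX hiid hid hl0 hl1 hl2 hM n
  obtain ⟨i2, e2⟩ := sum_centered hX hiid hid hl0 hl1 hl2 hM n
  set M : ℝ := mgf (X 0) ℙ l
  set m : ℝ := (n : ℝ) * tm (X 0) l with hm
  set S : Ω → ℝ := pS X n with hS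
  have hSm : Measurable S := meas_S hX n
  set B : Set Ω := {ω | |S ω - m| < r} with hBdef
  have hB : MeasurableSet B := measurableSet_lt ((hSm.sub_const m).abs) measurable_const
  have hBA : B ⊆ A := fun ω hω => hsub ω hω
  -- Chebyshev: ∫ over Bᶜ of exp is small
  have i2' : Integrable (fun ω => (S ω - m) ^ 2 / r ^ 2 * Real.exp (l * S ω)) ℙ := by
    have heq : (fun ω => (S ω - m) ^ 2 / r ^ 2 * Real.exp (l * S ω))
        = fun ω => ((S ω - m) ^ 2 * Real.exp (l * S ω)) / r ^ 2 := by
      funext ω; ring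
    rw [heq]; exact i2.div_const _
  have hcheb : ∫ ω in Bᶜ, Real.exp (l * S ω) ∂ℙ ≤ n * tv (X 0) l * M ^ n / r ^ 2 := by
    have h1 : ∫ ω in Bᶜ, Real.exp (l * S ω) ∂ℙ
        ≤ ∫ ω in Bᶜ, (S ω - m) ^ 2 / r ^ 2 * Real.exp (l * S ω) ∂ℙ := by
      apply setIntegral_mono_on (i0.integrableOn) (i2'.integrableOn) hB.compl
      intro ω hω
      have hge : r ≤ |S ω - m| := by
        simp only [hBdef, Set.mem_compl_iff, Set.mem_setOf_eq, not_lt] at hω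
        exact hω
      have h2 : r ^ 2 ≤ (S ω - m) ^ 2 := by
        calc r ^ 2 ≤ |S ω - m| ^ 2 := by nlinarith [abs_nonneg (S ω - m)]
          _ = (S ω - m) ^ 2 := sq_abs _
      have h3 : 1 ≤ (S ω - m) ^ 2 / r ^ 2 := by
        rw [le_div_iff₀ (by positivity)]; linarith
      calc Real.exp (l * S ω) = 1 * Real.exp (l * S ω) := (one_mul _).symm
        _ ≤ (S ω - m) ^ 2 / r ^ 2 * Real.exp (l * S ω) :=
            mul_le_mul_of_nonneg_right h3 (Real.exp_pos _).le
    have h2 : ∫ ω in Bᶜ, (S ω - m) ^ 2 / r ^ 2 * Real.exp (l * S ω) ∂ℙ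
        ≤ ∫ ω, (S ω - m) ^ 2 / r ^ 2 * Real.exp (l * S ω) ∂ℙ := by
      apply setIntegral_le_integral i2'
      filter_upwards with ω
      positivity
    have h3 : ∫ ω, (S ω - m) ^ 2 / r ^ 2 * Real.exp (l * S ω) ∂ℙ
        = n * tv (X 0) l * M ^ n / r ^ 2 := by
      have heq : (fun ω => (S ω - m) ^ 2 / r ^ 2 * Real.exp (l * S ω))
          = fun ω => ((S ω - m) ^ 2 * Real.exp (l * S ω)) / r ^ 2 := by
        funext ω; ring
      rw [heq, integral_div, e2]
    linarith
  -- main chain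
  have hmain : M ^ n * (1 - n * tv (X 0) l / r ^ 2) ≤ ∫ ω in B, Real.exp (l * S ω) ∂ℙ := by
    have hsum := integral_add_compl hB i0
    have htot : ∫ ω, Real.exp (l * S ω) ∂ℙ = M ^ n := e0
    have hexpand : M ^ n * (1 - ↑n * tv (X 0) l / r ^ 2)
        = M ^ n - ↑n * tv (X 0) l * M ^ n / r ^ 2 := by ring
    rw [hexpand]
    linarith
  have hup : ∫ ω in B, Real.exp (l * S ω) ∂ℙ
      ≤ Real.exp (l * m + |l| * r) * (ℙ B).toReal := by
    have h1 : ∫ ω in B, Real.exp (l * S ω) ∂ℙ ≤ ∫ ω in B, Real.exp (l * m + |l| * r) ∂ℙ := by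
      apply setIntegral_mono_on (i0.integrableOn) ((integrableOn_const_iff).mpr (Or.inr ?_)) hB ?_
      · exact measure_lt_top _ _
      · intro ω hω
        apply Real.exp_le_exp.mpr
        have habs : |S ω - m| < r := hω
        have : l * (S ω - m) ≤ |l| * r := by
          calc l * (S ω - m) ≤ |l * (S ω - m)| := le_abs_self _
            _ = |l| * |S ω - m| := abs_mul _ _
            _ ≤ |l| * r := by
                apply mul_le_mul_of_nonneg_left habs.le (abs_nonneg l)
        nlinarith
    have h2 : ∫ ω in B, Real.exp (l * m + |l| * r) ∂ℙ
        = Real.exp (l * m + |l| * r) * (ℙ B).toReal := by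
      rw [setIntegral_const, smul_eq_mul, mul_comm]; rfl
    linarith
  have hPBA : (ℙ B).toReal ≤ (ℙ A).toReal :=
    ENNReal.toReal_mono (measure_ne_top _ _) (measure_mono hBA)
  have hexp : Real.exp (n * Real.log M - l * m - |l| * r)
      = Real.exp (-(l * m + |l| * r)) * M ^ n := by
    rw [show (n : ℝ) * Real.log M - l * m - |l| * r
        = -(l * m + |l| * r) + n * Real.log M by ring, Real.exp_add]
    congr 1
    rw [Real.exp_nat_mul, Real.exp_log hM]
  rw [hexp]
  have hepos : (0:ℝ) < Real.exp (-(l * m + |l| * r)) := Real.exp_pos _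
  calc Real.exp (-(l * m + |l| * r)) * M ^ n * (1 - n * tv (X 0) l / r ^ 2)
      ≤ Real.exp (-(l * m + |l| * r)) * ∫ ω in B, Real.exp (l * S ω) ∂ℙ := by
        rw [mul_assoc]
        exact mul_le_mul_of_nonneg_left hmain hepos.le
    _ ≤ Real.exp (-(l * m + |l| * r)) * (Real.exp (l * m + |l| * r) * (ℙ B).toReal) :=
        mul_le_mul_of_nonneg_left hup hepos.le
    _ = (ℙ B).toReal := by
        rw [← mul_assoc, ← Real.exp_add,
          show -(l * m + |l| * r) + (l * m + |l| * r) = 0 by ring, Real.exp_zero, one_mul]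
    _ ≤ (ℙ A).toReal := hPBA

omit hl0 hl1 hl2 in
include hX hiid hid in
theorem chernoff_bound_ge (hl0' : ∀ i : ℕ, Integrable (fun ω => Real.exp (l * X i ω)) ℙ)
    (hl : 0 ≤ l) (n : ℕ) (u : ℝ) :
    (ℙ {ω | u ≤ pS X n ω}).toReal ≤ Real.exp (-l * u) * mgf (X 0) ℙ l ^ n := by
  have hfun : pS X n = ∑ i ∈ Finset.range n, X i := by
    funext ω; simp [pS, Finset.sum_apply]
  have hmgf : mgf (pS X n) ℙ l = mgf (X 0) ℙ l ^ n := by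
    rw [hfun, hiid.mgf_sum hX]
    have : ∀ i ∈ Finset.range n, mgf (X i) ℙ l = mgf (X 0) ℙ l := by
      intro i _
      unfold mgf
      exact ((hid i).comp ((measurable_id.const_mul l).exp)).integral_eq
    rw [Finset.prod_congr rfl this, Finset.prod_const, Finset.card_range]
  have hint : Integrable (fun ω => Real.exp (l * pS X n ω)) ℙ := by
    rw [hfun]
    exact hiid.integrable_exp_mul_sum hX (fun i _ => hl0' i)
  have := measure_ge_le_exp_mul_mgf (X := pS X n) (μ := ℙ) u hl hint
  rwa [hmgf] at this

omit hl0 hl1 hl2 in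
include hX hiid hid in
theorem chernoff_bound_le (hl0' : ∀ i : ℕ, Integrable (fun ω => Real.exp (l * X i ω)) ℙ)
    (hl : l ≤ 0) (n : ℕ) (u : ℝ) :
    (ℙ {ω | pS X n ω ≤ u}).toReal ≤ Real.exp (-l * u) * mgf (X 0) ℙ l ^ n := by
  have hfun : pS X n = ∑ i ∈ Finset.range n, X i := by
    funext ω; simp [pS, Finset.sum_apply]
  have hmgf : mgf (pS X n) ℙ l = mgf (X 0) ℙ l ^ n := by
    rw [hfun, hiid.mgf_sum hX]
    have : ∀ i ∈ Finset.range n, mgf (X i) ℙ l = mgf (X 0) ℙ l := by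
      intro i _
      unfold mgf
      exact ((hid i).comp ((measurable_id.const_mul l).exp)).integral_eq
    rw [Finset.prod_congr rfl this, Finset.prod_const, Finset.card_range]
  have hint : Integrable (fun ω => Real.exp (l * pS X n ω)) ℙ := by
    rw [hfun]
    exact hiid.integrable_exp_mul_sum hX (fun i _ => hl0' i)
  have := measure_le_le_exp_mul_mgf (X := pS X n) (μ := ℙ) u hl hint
  rwa [hmgf] at this


end sums

/-- generic: sandwich bounds for all small ε give the `(1+o(1))` exponential form. -/
lemma exists_err (P c : ℕ → ℝ) (hc : Tendsto c atTop atTop)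
    (h : ∀ ε : ℝ, 0 < ε → ε < 1 → ∀ᶠ n in atTop,
      Real.exp (-(1 + ε) * c n) ≤ P n ∧ P n ≤ Real.exp (-(1 - ε) * c n)) :
    ∃ e : ℕ → ℝ, Tendsto e atTop (𝓝 0) ∧
      ∀ᶠ n in atTop, P n = Real.exp (-(c n) * (1 + e n)) := by
  refine ⟨fun n => -Real.log (P n) / c n - 1, ?_, ?_⟩
  · -- tendsto: show log P n / c n → -1
    rw [show (0:ℝ) = 1 - 1 by norm_num]
    apply Tendsto.sub_const
    rw [Metric.tendsto_atTop]
    intro ε hε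
    set ε' := min (ε/2) (1/2) with hε'
    have hε'0 : 0 < ε' := by positivity
    have hε'1 : ε' < 1 := by
      calc ε' ≤ 1/2 := min_le_right _ _
        _ < 1 := by norm_num
    have h1 := h ε' hε'0 hε'1
    have h2 : ∀ᶠ n in atTop, 0 < c n := hc.eventually_gt_atTop 0
    rw [eventually_atTop] at h1 h2
    obtain ⟨N1, hN1⟩ := h1
    obtain ⟨N2, hN2⟩ := h2
    refine ⟨max N1 N2, fun n hn => ?_⟩
    have hb := hN1 n (le_trans (le_max_left _ _) hn)
    have hcp := hN2 n (le_trans (le_max_right _ _) hn)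
    have hP0 : 0 < P n := lt_of_lt_of_le (Real.exp_pos _) hb.1
    have hlog1 : -(1 + ε') * c n ≤ Real.log (P n) := by
      calc -(1 + ε') * c n = Real.log (Real.exp (-(1 + ε') * c n)) := (Real.log_exp _).symm
        _ ≤ Real.log (P n) := Real.log_le_log (Real.exp_pos _) hb.1
    have hlog2 : Real.log (P n) ≤ -(1 - ε') * c n := by
      calc Real.log (P n) ≤ Real.log (Real.exp (-(1 - ε') * c n)) :=
            Real.log_le_log hP0 hb.2
        _ = -(1 - ε') * c n := Real.log_exp _
    rw [Real.dist_eq]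
    have hd1 : -Real.log (P n) / c n ≤ 1 + ε' := by
      rw [div_le_iff₀ hcp]; linarith
    have hd2 : 1 - ε' ≤ -Real.log (P n) / c n := by
      rw [le_div_iff₀ hcp]; linarith
    have : |(-Real.log (P n) / c n) - 1| ≤ ε' := by
      rw [abs_le]; constructor <;> linarith
    calc |(-Real.log (P n) / c n) - 1| ≤ ε' := this
      _ ≤ ε / 2 := min_le_left _ _
      _ < ε := by linarith
  · have h1 := h (1/2) (by norm_num) (by norm_num)
    have h2 : ∀ᶠ n in atTop, 0 < c n := hc.eventually_gt_atTop 0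
    filter_upwards [h1, h2] with n hb hcp
    have hP0 : 0 < P n := lt_of_lt_of_le (Real.exp_pos _) hb.1
    have : -(c n) * (1 + (-Real.log (P n) / c n - 1)) = Real.log (P n) := by
      field_simp; ring
    rw [this, Real.exp_log hP0]


section main

variable {X : ℕ → Ω → ℝ} {t μ σ2 : ℝ} {a : ℕ → ℝ}
variable (hX : ∀ i, Measurable (X i))
  (hiid : iIndepFun X ℙ)
  (hid : ∀ i, IdentDistrib (X i) (X 0) ℙ ℙ)
  (hpos : ∀ i, 0 ≤ᵐ[ℙ] X i)
  (hμ : μ = ∫ ω, X 0 ω ∂ℙ)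
  (hσ2 : σ2 = variance (X 0) ℙ) (hσ2pos : 0 < σ2)
  (ht : 0 < t)
  (hexpmom : Integrable (fun ω => Real.exp (t * X 0 ω)) ℙ)
  (hapos : ∀ n, 0 < a n)
  (ha1 : Tendsto (fun n : ℕ => a n / (n : ℝ) ^ ((1 : ℝ) / 2)) atTop atTop)
  (ha2 : Tendsto (fun n : ℕ => a n / (n : ℝ)) atTop (𝓝 0))

include hapos ha1 in
lemma asq_div_n_tendsto : Tendsto (fun n : ℕ => a n ^ 2 / (n : ℝ)) atTop atTop := by
  have h1 : Tendsto (fun n : ℕ => (a n / (n : ℝ) ^ ((1:ℝ)/2)) ^ 2) atTop atTop :=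
    (tendsto_pow_atTop (two_ne_zero)).comp ha1
  apply h1.congr'
  filter_upwards [eventually_ge_atTop 1] with n hn
  have hn0 : (0:ℝ) ≤ (n:ℝ) := Nat.cast_nonneg n
  have : ((n:ℝ) ^ ((1:ℝ)/2)) ^ 2 = (n:ℝ) := by
    rw [← Real.rpow_natCast ((n:ℝ) ^ ((1:ℝ)/2)) 2, ← Real.rpow_mul hn0]
    norm_num
  rw [div_pow, this]

include hapos ha1 hσ2pos in
lemma c_tendsto : Tendsto (fun n : ℕ => a n ^ 2 / (2 * σ2 * (n:ℝ))) atTop atTop := by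
  have h1 := asq_div_n_tendsto hapos ha1
  have h2 := h1.atTop_div_const (by positivity : (0:ℝ) < 2 * σ2)
  apply h2.congr
  intro n
  rw [div_div, mul_comm ((n:ℝ)) (2*σ2)]

include hapos ha1 in
lemma n_div_asq_tendsto : Tendsto (fun n : ℕ => (n:ℝ) / a n ^ 2) atTop (𝓝 0) := by
  have h1 := asq_div_n_tendsto hapos ha1
  have h2 := h1.inv_tendsto_atTop
  apply h2.congr
  intro n
  rw [Pi.inv_apply, inv_div]

include hX hiid hid hpos hμ hσ2 hσ2pos ht hexpmom hapos ha1 ha2 in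
lemma eventually_chernoff_upper {ε : ℝ} (hε0 : 0 < ε) (hε1 : ε < 1) :
    ∀ᶠ n : ℕ in atTop,
      (ℙ {ω | n * μ + a n < pS X n ω}).toReal
        ≤ Real.exp (-(1 - ε) * (a n ^ 2 / (2 * σ2 * (n:ℝ)))) := by
  have hY := hX 0
  have hposY := hpos 0
  set ε' : ℝ := σ2 * ε / 512 with hε'def
  have hε'0 : 0 < ε' := by positivity
  obtain ⟨δ, hδ0, hδlt, hδ⟩ := cgf_bound hY hposY ht hexpmom hε'0
  -- smallness of the tilt parameter
  have hl0 : Tendsto (fun n : ℕ => (1/σ2) * (a n / (n:ℝ))) atTop (𝓝 0) := by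
    simpa using ha2.const_mul (1/σ2)
  have hevδ : ∀ᶠ n : ℕ in atTop, |(1/σ2) * (a n / (n:ℝ))| ≤ δ := by
    have := (Metric.tendsto_nhds.mp hl0) δ hδ0
    filter_upwards [this] with n hn
    rw [Real.dist_eq, sub_zero] at hn
    exact hn.le
  filter_upwards [hevδ, eventually_ge_atTop 1] with n hnδ hn1
  have hN1 : (1:ℝ) ≤ (n:ℝ) := by exact_mod_cast hn1
  have hNpos : (0:ℝ) < (n:ℝ) := by linarith
  have hNne : ((n:ℝ)) ≠ 0 := ne_of_gt hNpos
  have han : 0 < a n := hapos n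
  set N : ℝ := (n:ℝ) with hNdef
  set L : ℝ := (1/σ2) * (a n / N) with hLdef
  have hL0 : 0 < L := by positivity
  have hLt : L ≤ t := by
    have := le_trans (le_abs_self L) hnδ
    linarith
  have hLδ : |L| ≤ δ := hnδ
  -- Chernoff
  have hintL : ∀ i : ℕ, Integrable (fun ω => Real.exp (L * X i ω)) ℙ :=
    int_exp_i hid (int_exp' hY hposY ht hexpmom hLt)
  have hM : 0 < mgf (X 0) ℙ L := mgf_pos (hintL 0)
  have hmono : (ℙ {ω | N * μ + a n < pS X n ω}).toReal
      ≤ (ℙ {ω | N * μ + a n ≤ pS X n ω}).toReal := by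
    apply ENNReal.toReal_mono (measure_ne_top _ _)
    apply measure_mono
    intro ω hω
    simp only [Set.mem_setOf_eq] at hω ⊢
    exact hω.le
  have hcher := chernoff_bound_ge hX hiid hid hintL hL0.le n (N * μ + a n)
  -- rewrite mgf power as exponential
  have hmgfpow : Real.exp (-L * (N * μ + a n)) * mgf (X 0) ℙ L ^ n
      = Real.exp (N * Real.log (mgf (X 0) ℙ L) - L * (N * μ + a n)) := by
    rw [show N * Real.log (mgf (X 0) ℙ L) - L * (N * μ + a n)
        = -L * (N * μ + a n) + N * Real.log (mgf (X 0) ℙ L) by ring, Real.exp_add]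
    congr 1
    rw [hNdef, Real.exp_nat_mul, Real.exp_log hM]
  -- exponent estimate
  have hΛub : Real.log (mgf (X 0) ℙ L) ≤ μ * L + σ2 * L ^ 2 / 2 + ε' * L ^ 2 := by
    have := (abs_le.mp (hδ L hLδ)).2
    rw [← hμ, ← hσ2] at this
    linarith
  have hσ2ne : σ2 ≠ 0 := ne_of_gt hσ2pos
  set c : ℝ := a n ^ 2 / (2 * σ2 * N) with hcdef
  have hcpos : 0 < c := by positivity
  have idA : N * (σ2 * L ^ 2 / 2) = c := by
    rw [hLdef, hcdef]; field_simp
  have idB : N * (ε' * L ^ 2) = (ε / 256) * c := by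
    rw [hLdef, hcdef, hε'def]; field_simp; ring
  have idC : L * a n = 2 * c := by
    rw [hLdef, hcdef]; field_simp
  have idD : N * (μ * L) = μ * (N * L) := by ring
  have hE : N * Real.log (mgf (X 0) ℙ L) - L * (N * μ + a n)
      ≤ -(1 - ε) * c := by
    have h1 : N * Real.log (mgf (X 0) ℙ L)
        ≤ N * (μ * L + σ2 * L ^ 2 / 2 + ε' * L ^ 2) :=
      mul_le_mul_of_nonneg_left hΛub (le_of_lt hNpos)
    have h2 : N * (μ * L + σ2 * L ^ 2 / 2 + ε' * L ^ 2)
        = μ * (N * L) + c + (ε / 256) * c := by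
      rw [mul_add, mul_add, idA, idB]; ring
    have h3 : L * (N * μ + a n) = μ * (N * L) + 2 * c := by
      rw [mul_add, ← idC]; ring
    have h4 : (ε / 256) * c ≤ ε * c := by
      apply mul_le_mul_of_nonneg_right _ hcpos.le
      linarith
    calc N * Real.log (mgf (X 0) ℙ L) - L * (N * μ + a n)
        ≤ (μ * (N * L) + c + (ε / 256) * c) - (μ * (N * L) + 2 * c) := by
          rw [← h2, ← h3]; linarith
      _ = (ε / 256) * c - c := by ring
      _ ≤ -(1 - ε) * c := by linarith
  calc (ℙ {ω | N * μ + a n < pS X n ω}).toReal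
      ≤ (ℙ {ω | N * μ + a n ≤ pS X n ω}).toReal := hmono
    _ ≤ Real.exp (-L * (N * μ + a n)) * mgf (X 0) ℙ L ^ n := hcher
    _ = Real.exp (N * Real.log (mgf (X 0) ℙ L) - L * (N * μ + a n)) := hmgfpow
    _ ≤ Real.exp (-(1 - ε) * c) := Real.exp_le_exp.mpr hE

include hX hiid hid hpos hμ hσ2 hσ2pos ht hexpmom hapos ha1 ha2 in
lemma eventually_chernoff_lower {ε : ℝ} (hε0 : 0 < ε) (hε1 : ε < 1) :
    ∀ᶠ n : ℕ in atTop,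
      (ℙ {ω | pS X n ω < n * μ - a n}).toReal
        ≤ Real.exp (-(1 - ε) * (a n ^ 2 / (2 * σ2 * (n:ℝ)))) := by
  have hY := hX 0
  have hposY := hpos 0
  set ε' : ℝ := σ2 * ε / 512 with hε'def
  have hε'0 : 0 < ε' := by positivity
  obtain ⟨δ, hδ0, hδlt, hδ⟩ := cgf_bound hY hposY ht hexpmom hε'0
  have hl0 : Tendsto (fun n : ℕ => (1/σ2) * (a n / (n:ℝ))) atTop (𝓝 0) := by
    simpa using ha2.const_mul (1/σ2)
  have hevδ : ∀ᶠ n : ℕ in atTop, |(1/σ2) * (a n / (n:ℝ))| ≤ δ := by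
    have := (Metric.tendsto_nhds.mp hl0) δ hδ0
    filter_upwards [this] with n hn
    rw [Real.dist_eq, sub_zero] at hn
    exact hn.le
  filter_upwards [hevδ, eventually_ge_atTop 1] with n hnδ hn1
  have hN1 : (1:ℝ) ≤ (n:ℝ) := by exact_mod_cast hn1
  have hNpos : (0:ℝ) < (n:ℝ) := by linarith
  have hNne : ((n:ℝ)) ≠ 0 := ne_of_gt hNpos
  have han : 0 < a n := hapos n
  set N : ℝ := (n:ℝ) with hNdef
  set L : ℝ := (1/σ2) * (a n / N) with hLdef
  have hL0 : 0 < L := by positivity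
  have hLt : -L ≤ t := by
    have : 0 < t := ht
    linarith
  have hLδ : |(-L)| ≤ δ := by
    rw [abs_neg]
    exact hnδ
  have hintL : ∀ i : ℕ, Integrable (fun ω => Real.exp (-L * X i ω)) ℙ :=
    int_exp_i hid (int_exp' hY hposY ht hexpmom hLt)
  have hM : 0 < mgf (X 0) ℙ (-L) := mgf_pos (hintL 0)
  have hmono : (ℙ {ω | pS X n ω < N * μ - a n}).toReal
      ≤ (ℙ {ω | pS X n ω ≤ N * μ - a n}).toReal := by
    apply ENNReal.toReal_mono (measure_ne_top _ _)
    apply measure_mono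
    intro ω hω
    simp only [Set.mem_setOf_eq] at hω ⊢
    exact hω.le
  have hcher := chernoff_bound_le hX hiid hid hintL (by linarith : -L ≤ 0) n (N * μ - a n)
  have hmgfpow : Real.exp (-(-L) * (N * μ - a n)) * mgf (X 0) ℙ (-L) ^ n
      = Real.exp (N * Real.log (mgf (X 0) ℙ (-L)) - (-L) * (N * μ - a n)) := by
    rw [show N * Real.log (mgf (X 0) ℙ (-L)) - (-L) * (N * μ - a n)
        = -(-L) * (N * μ - a n) + N * Real.log (mgf (X 0) ℙ (-L)) by ring, Real.exp_add]
    congr 1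
    rw [hNdef, Real.exp_nat_mul, Real.exp_log hM]
  have hΛub : Real.log (mgf (X 0) ℙ (-L))
      ≤ μ * (-L) + σ2 * (-L) ^ 2 / 2 + ε' * (-L) ^ 2 := by
    have := (abs_le.mp (hδ (-L) hLδ)).2
    rw [← hμ, ← hσ2] at this
    linarith
  have hσ2ne : σ2 ≠ 0 := ne_of_gt hσ2pos
  set c : ℝ := a n ^ 2 / (2 * σ2 * N) with hcdef
  have hcpos : 0 < c := by positivity
  have idA : N * (σ2 * (-L) ^ 2 / 2) = c := by
    rw [hLdef, hcdef]; field_simp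
  have idB : N * (ε' * (-L) ^ 2) = (ε / 256) * c := by
    rw [hLdef, hcdef, hε'def]; field_simp; ring
  have idC : L * a n = 2 * c := by
    rw [hLdef, hcdef]; field_simp
  have hE : N * Real.log (mgf (X 0) ℙ (-L)) - (-L) * (N * μ - a n)
      ≤ -(1 - ε) * c := by
    have h1 : N * Real.log (mgf (X 0) ℙ (-L))
        ≤ N * (μ * (-L) + σ2 * (-L) ^ 2 / 2 + ε' * (-L) ^ 2) :=
      mul_le_mul_of_nonneg_left hΛub (le_of_lt hNpos)
    have h2 : N * (μ * (-L) + σ2 * (-L) ^ 2 / 2 + ε' * (-L) ^ 2)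
        = -(μ * (N * L)) + c + (ε / 256) * c := by
      rw [mul_add, mul_add, idA, idB]; ring
    have h3 : (-L) * (N * μ - a n) = -(μ * (N * L)) + 2 * c := by
      rw [show (-L) * (N * μ - a n) = -(μ * (N * L)) + L * a n by ring, idC]
    have h4 : (ε / 256) * c ≤ ε * c := by
      apply mul_le_mul_of_nonneg_right _ hcpos.le
      linarith
    calc N * Real.log (mgf (X 0) ℙ (-L)) - (-L) * (N * μ - a n)
        ≤ (-(μ * (N * L)) + c + (ε / 256) * c) - (-(μ * (N * L)) + 2 * c) := by
          rw [← h2, ← h3]; linarith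
      _ = (ε / 256) * c - c := by ring
      _ ≤ -(1 - ε) * c := by linarith
  calc (ℙ {ω | pS X n ω < N * μ - a n}).toReal
      ≤ (ℙ {ω | pS X n ω ≤ N * μ - a n}).toReal := hmono
    _ ≤ Real.exp (-(-L) * (N * μ - a n)) * mgf (X 0) ℙ (-L) ^ n := hcher
    _ = Real.exp (N * Real.log (mgf (X 0) ℙ (-L)) - (-L) * (N * μ - a n)) := hmgfpow
    _ ≤ Real.exp (-(1 - ε) * c) := Real.exp_le_exp.mpr hE

include hX hiid hid hpos hμ hσ2 hσ2pos ht hexpmom hapos ha1 ha2 in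
lemma eventually_tilt_upper {ε : ℝ} (hε0 : 0 < ε) (hε1 : ε < 1) :
    ∀ᶠ n : ℕ in atTop,
      Real.exp (-(1 + ε) * (a n ^ 2 / (2 * σ2 * (n:ℝ))))
        ≤ (ℙ {ω | n * μ + a n < pS X n ω}).toReal := by
  have hY := hX 0
  have hposY := hpos 0
  set ε' : ℝ := σ2 * ε / 512 with hε'def
  have hε'0 : 0 < ε' := by positivity
  obtain ⟨δ₁, hδ₁0, hδ₁lt, hδ₁⟩ := cgf_bound hY hposY ht hexpmom hε'0
  obtain ⟨δ₂, hδ₂0, hδ₂lt, hδ₂⟩ := tm_bound hY hposY ht hexpmom hε'0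
  obtain ⟨δ₃, hδ₃0, hδ₃lt, hδ₃⟩ := tv_bound hY hposY ht hexpmom hσ2pos
  set δ : ℝ := min δ₁ (min δ₂ δ₃) with hδdef
  have hδ0 : 0 < δ := lt_min hδ₁0 (lt_min hδ₂0 hδ₃0)
  have hδlt : δ < t / 4 := lt_of_le_of_lt (min_le_left _ _) hδ₁lt
  set κ : ℝ := 1 + ε / 8 with hκdef
  have hκpos : 0 < κ := by rw [hκdef]; linarith
  -- eventual conditions
  have hl0 : Tendsto (fun n : ℕ => (κ/σ2) * (a n / (n:ℝ))) atTop (𝓝 0) := by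
    simpa using ha2.const_mul (κ/σ2)
  have hevδ : ∀ᶠ n : ℕ in atTop, |(κ/σ2) * (a n / (n:ℝ))| ≤ δ := by
    have := (Metric.tendsto_nhds.mp hl0) δ hδ0
    filter_upwards [this] with n hn
    rw [Real.dist_eq, sub_zero] at hn
    exact hn.le
  have hevc : ∀ᶠ n : ℕ in atTop, 2 / ε ≤ a n ^ 2 / (2 * σ2 * (n:ℝ)) :=
    (c_tendsto hσ2pos hapos ha1).eventually_ge_atTop _
  have hevq : ∀ᶠ n : ℕ in atTop, (n:ℝ) * (2 * σ2) / ((ε/32) * a n) ^ 2 ≤ 1/2 := by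
    have hg : Tendsto (fun n : ℕ => (n:ℝ) * (2 * σ2) / ((ε/32) * a n) ^ 2) atTop (𝓝 0) := by
      have h1 := (n_div_asq_tendsto hapos ha1).const_mul (2048 * σ2 / ε ^ 2)
      rw [mul_zero] at h1
      apply h1.congr
      intro n
      have han := (hapos n).ne'
      have hεne := hε0.ne'
      field_simp
      ring
    exact hg.eventually (eventually_le_nhds (by norm_num : (0:ℝ) < 1/2))
  filter_upwards [hevδ, hevc, hevq, eventually_ge_atTop 1] with n hnδ hnc hnq hn1
  have hN1 : (1:ℝ) ≤ (n:ℝ) := by exact_mod_cast hn1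
  have hNpos : (0:ℝ) < (n:ℝ) := by linarith
  have hNne : ((n:ℝ)) ≠ 0 := ne_of_gt hNpos
  have han : 0 < a n := hapos n
  have hσ2ne : σ2 ≠ 0 := ne_of_gt hσ2pos
  set N : ℝ := (n:ℝ) with hNdef
  set L : ℝ := (κ/σ2) * (a n / N) with hLdef
  set R : ℝ := (ε/32) * a n with hRdef
  have hR0 : 0 < R := by positivity
  have hL0 : 0 < L := by positivity
  have hLabs : |L| = L := abs_of_pos hL0
  have hLδ : |L| ≤ δ := hnδ
  have hLδ₁ : |L| ≤ δ₁ := le_trans hLδ (min_le_left _ _)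
  have hLδ₂ : |L| ≤ δ₂ := le_trans hLδ (le_trans (min_le_right _ _) (min_le_left _ _))
  have hLδ₃ : |L| ≤ δ₃ := le_trans hLδ (le_trans (min_le_right _ _) (min_le_right _ _))
  have hLlt : L < t / 4 := by
    rw [← hLabs]; exact lt_of_le_of_lt hLδ hδlt
  -- integrability
  have hil0 : Integrable (fun ω => Real.exp (L * X 0 ω)) ℙ :=
    int_exp' hY hposY ht hexpmom (by linarith)
  have hil1 : Integrable (fun ω => X 0 ω * Real.exp (L * X 0 ω)) ℙ :=
    int_mul_exp' hY hposY ht hexpmom (by linarith)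
  have hil2 : Integrable (fun ω => X 0 ω ^ 2 * Real.exp (L * X 0 ω)) ℙ :=
    int_sq_exp' hY hposY ht hexpmom (by linarith)
  have hM : 0 < mgf (X 0) ℙ L := mgf_pos hil0
  set m : ℝ := tm (X 0) L with hmdef
  set V : ℝ := tv (X 0) L with hVdef
  set c : ℝ := a n ^ 2 / (2 * σ2 * N) with hcdef
  have hcpos : 0 < c := by positivity
  -- bounds from Taylor expansions
  have hmb' := hδ₂ L hLδ₂
  rw [← hμ, ← hσ2] at hmb'
  have hmb := abs_le.mp hmb'
  have hΛb' := hδ₁ L hLδ₁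
  rw [← hμ, ← hσ2] at hΛb'
  have hΛb := abs_le.mp hΛb'
  have hVb' := hδ₃ L hLδ₃
  rw [← hσ2] at hVb'
  have hVb := abs_le.mp hVb'
  rw [hLabs] at hmb
  have hVle : V ≤ 2 * σ2 := by linarith [hVb.2]
  -- identities
  have hNL : σ2 * (N * L) = κ * a n := by
    rw [hLdef]; field_simp
  have hNL2 : N * L ^ 2 = 2 * κ ^ 2 * c / σ2 := by
    rw [hLdef, hcdef]; field_simp
  have hLR : L * R = κ * ε * c / 16 := by
    rw [hLdef, hRdef, hcdef]; field_simp; ring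
  -- window condition
  have hwin : N * μ + a n ≤ N * m - R := by
    have h1 : μ + σ2 * L - ε' * L ≤ m := by linarith [hmb.1]
    have h2 : N * (μ + σ2 * L - ε' * L) ≤ N * m :=
      mul_le_mul_of_nonneg_left h1 hNpos.le
    have h3 : N * (μ + σ2 * L - ε' * L)
        = N * μ + κ * a n - (ε/512) * (κ * a n) := by
      rw [show N * (μ + σ2 * L - ε' * L)
          = N * μ + σ2 * (N * L) - (ε/512) * (σ2 * (N * L)) by rw [hε'def]; ring, hNL]
    have h4 : N * μ + κ * a n - (ε/512) * (κ * a n) - R ≥ N * μ + a n := by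
      rw [hRdef, hκdef]
      nlinarith only [han, hε0, hε1, mul_pos han hε0,
        mul_nonneg (mul_nonneg han.le hε0.le) (sub_nonneg.mpr hε1.le)]
    linarith
  -- apply the tilt bound
  set A : Set Ω := {ω | N * μ + a n < pS X n ω} with hAdef
  have hA : MeasurableSet A := measurableSet_lt measurable_const (meas_S hX n)
  have hsub : ∀ ω, |pS X n ω - n * m| < R → ω ∈ A := by
    intro ω hω
    have := (abs_lt.mp hω).1
    simp only [hAdef, Set.mem_setOf_eq]
    have : N * m - R < pS X n ω := by
      rw [hNdef] at *
      linarith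
    linarith [hwin]
  have htilt := tilt_lower_bound hX hiid hid hil0 hil1 hil2 hM n hR0 A hA hsub
  -- Chebyshev factor
  have hq : (n:ℝ) * V / R ^ 2 ≤ 1/2 := by
    have h1 : N * V ≤ N * (2 * σ2) := mul_le_mul_of_nonneg_left hVle hNpos.le
    have h2 : N * V / R ^ 2 ≤ N * (2 * σ2) / R ^ 2 :=
      (div_le_div_iff_of_pos_right (by positivity : (0:ℝ) < R ^ 2)).mpr h1
    exact le_trans h2 hnq
  have h1mq : (1:ℝ)/2 ≤ 1 - (n:ℝ) * V / R ^ 2 := by linarith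
  -- exponent estimate
  have hE : -(1 + ε) * c + 1
      ≤ N * Real.log (mgf (X 0) ℙ L) - L * (N * m) - |L| * R := by
    rw [hLabs]
    have k1 : N * (μ * L + σ2 * L ^ 2 / 2 - ε' * L ^ 2)
        ≤ N * Real.log (mgf (X 0) ℙ L) :=
      mul_le_mul_of_nonneg_left (by linarith [hΛb.1]) hNpos.le
    have k2 : N * m ≤ N * (μ + σ2 * L + ε' * L) :=
      mul_le_mul_of_nonneg_left (by linarith [hmb.2]) hNpos.le
    have k2' : L * (N * m) ≤ L * (N * (μ + σ2 * L + ε' * L)) :=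
      mul_le_mul_of_nonneg_left k2 hL0.le
    have k3 : N * (μ * L + σ2 * L ^ 2 / 2 - ε' * L ^ 2)
          - L * (N * (μ + σ2 * L + ε' * L)) - L * R
        = -(σ2 * (N * L ^ 2)) / 2 - 2 * ε' * (N * L ^ 2) - L * R := by ring
    have k4 : -(σ2 * (N * L ^ 2)) / 2 - 2 * ε' * (N * L ^ 2) - L * R
        = -(κ ^ 2 * c) - (ε * κ ^ 2 * c) / 128 - κ * ε * c / 16 := by
      rw [hNL2, hLR, hε'def]; field_simp; ring
    have k5 : κ ^ 2 + ε * κ ^ 2 / 128 + κ * ε / 16 ≤ 1 + ε / 2 := by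
      rw [hκdef]
      nlinarith only [sq_nonneg ε, hε0.le, hε1.le, hε0, hε1]
    have k6 : (κ ^ 2 + ε * κ ^ 2 / 128 + κ * ε / 16) * c ≤ (1 + ε / 2) * c :=
      mul_le_mul_of_nonneg_right k5 hcpos.le
    have k7 : 1 ≤ (ε / 2) * c := by
      have h := hnc
      rw [div_le_iff₀ hε0] at h
      linarith only [h]
    have k8 : -(σ2 * (N * L ^ 2)) / 2 - 2 * ε' * (N * L ^ 2) - L * R
        = -((κ ^ 2 + ε * κ ^ 2 / 128 + κ * ε / 16) * c) := by
      rw [k4]; ring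
    linarith only [k1, k2', k3, k4, k6, k7, k8]
  -- final chain
  calc Real.exp (-(1 + ε) * c)
      ≤ Real.exp ((N * Real.log (mgf (X 0) ℙ L) - L * (N * m) - |L| * R) - 1) := by
        apply Real.exp_le_exp.mpr
        linarith
    _ = Real.exp (N * Real.log (mgf (X 0) ℙ L) - L * (N * m) - |L| * R)
        * Real.exp (-1) := by
        rw [← Real.exp_add]; ring_nf
    _ ≤ Real.exp (N * Real.log (mgf (X 0) ℙ L) - L * (N * m) - |L| * R)
        * (1 - (n:ℝ) * V / R ^ 2) := by
        apply mul_le_mul_of_nonneg_left _ (Real.exp_pos _).le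
        have hexp1 : Real.exp (-1 : ℝ) ≤ 1/2 := by
          rw [Real.exp_neg]
          rw [inv_le_comm₀ _ (by norm_num)]
          · calc (1/2: ℝ)⁻¹ = 2 := by norm_num
              _ ≤ Real.exp 1 := by linarith [Real.add_one_le_exp 1]
          · exact Real.exp_pos 1
        linarith
    _ ≤ (ℙ A).toReal := by
        rw [hNdef] at *
        exact htilt

include hX hiid hid hpos hμ hσ2 hσ2pos ht hexpmom hapos ha1 ha2 in
lemma eventually_tilt_lower {ε : ℝ} (hε0 : 0 < ε) (hε1 : ε < 1) :
    ∀ᶠ n : ℕ in atTop,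
      Real.exp (-(1 + ε) * (a n ^ 2 / (2 * σ2 * (n:ℝ))))
        ≤ (ℙ {ω | pS X n ω < n * μ - a n}).toReal := by
  have hY := hX 0
  have hposY := hpos 0
  set ε' : ℝ := σ2 * ε / 512 with hε'def
  have hε'0 : 0 < ε' := by positivity
  obtain ⟨δ₁, hδ₁0, hδ₁lt, hδ₁⟩ := cgf_bound hY hposY ht hexpmom hε'0
  obtain ⟨δ₂, hδ₂0, hδ₂lt, hδ₂⟩ := tm_bound hY hposY ht hexpmom hε'0
  obtain ⟨δ₃, hδ₃0, hδ₃lt, hδ₃⟩ := tv_bound hY hposY ht hexpmom hσ2pos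
  set δ : ℝ := min δ₁ (min δ₂ δ₃) with hδdef
  have hδ0 : 0 < δ := lt_min hδ₁0 (lt_min hδ₂0 hδ₃0)
  have hδlt : δ < t / 4 := lt_of_le_of_lt (min_le_left _ _) hδ₁lt
  set κ : ℝ := 1 + ε / 8 with hκdef
  have hκpos : 0 < κ := by rw [hκdef]; linarith
  have hl0 : Tendsto (fun n : ℕ => (κ/σ2) * (a n / (n:ℝ))) atTop (𝓝 0) := by
    simpa using ha2.const_mul (κ/σ2)
  have hevδ : ∀ᶠ n : ℕ in atTop, |(κ/σ2) * (a n / (n:ℝ))| ≤ δ := by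
    have := (Metric.tendsto_nhds.mp hl0) δ hδ0
    filter_upwards [this] with n hn
    rw [Real.dist_eq, sub_zero] at hn
    exact hn.le
  have hevc : ∀ᶠ n : ℕ in atTop, 2 / ε ≤ a n ^ 2 / (2 * σ2 * (n:ℝ)) :=
    (c_tendsto hσ2pos hapos ha1).eventually_ge_atTop _
  have hevq : ∀ᶠ n : ℕ in atTop, (n:ℝ) * (2 * σ2) / ((ε/32) * a n) ^ 2 ≤ 1/2 := by
    have hg : Tendsto (fun n : ℕ => (n:ℝ) * (2 * σ2) / ((ε/32) * a n) ^ 2) atTop (𝓝 0) := by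
      have h1 := (n_div_asq_tendsto hapos ha1).const_mul (2048 * σ2 / ε ^ 2)
      rw [mul_zero] at h1
      apply h1.congr
      intro n
      have han := (hapos n).ne'
      have hεne := hε0.ne'
      field_simp
      ring
    exact hg.eventually (eventually_le_nhds (by norm_num : (0:ℝ) < 1/2))
  filter_upwards [hevδ, hevc, hevq, eventually_ge_atTop 1] with n hnδ hnc hnq hn1
  have hN1 : (1:ℝ) ≤ (n:ℝ) := by exact_mod_cast hn1
  have hNpos : (0:ℝ) < (n:ℝ) := by linarith
  have hNne : ((n:ℝ)) ≠ 0 := ne_of_gt hNpos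
  have han : 0 < a n := hapos n
  have hσ2ne : σ2 ≠ 0 := ne_of_gt hσ2pos
  set N : ℝ := (n:ℝ) with hNdef
  set L : ℝ := (κ/σ2) * (a n / N) with hLdef
  set R : ℝ := (ε/32) * a n with hRdef
  have hR0 : 0 < R := by positivity
  have hL0 : 0 < L := by positivity
  have hLabs : |L| = L := abs_of_pos hL0
  have hLabsneg : |(-L)| = L := by rw [abs_neg, hLabs]
  have hLδ : |L| ≤ δ := hnδ
  have hLδneg : |(-L)| ≤ δ := by rw [hLabsneg, ← hLabs]; exact hLδ
  have hLδ₁ : |(-L)| ≤ δ₁ := le_trans hLδneg (min_le_left _ _)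
  have hLδ₂ : |(-L)| ≤ δ₂ := le_trans hLδneg (le_trans (min_le_right _ _) (min_le_left _ _))
  have hLδ₃ : |(-L)| ≤ δ₃ := le_trans hLδneg (le_trans (min_le_right _ _) (min_le_right _ _))
  -- integrability at -L
  have hil0 : Integrable (fun ω => Real.exp (-L * X 0 ω)) ℙ :=
    int_exp' hY hposY ht hexpmom (by linarith)
  have hil1 : Integrable (fun ω => X 0 ω * Real.exp (-L * X 0 ω)) ℙ :=
    int_mul_exp' hY hposY ht hexpmom (by linarith)
  have hil2 : Integrable (fun ω => X 0 ω ^ 2 * Real.exp (-L * X 0 ω)) ℙ :=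
    int_sq_exp' hY hposY ht hexpmom (by linarith)
  have hM : 0 < mgf (X 0) ℙ (-L) := mgf_pos hil0
  set m : ℝ := tm (X 0) (-L) with hmdef
  set V : ℝ := tv (X 0) (-L) with hVdef
  set c : ℝ := a n ^ 2 / (2 * σ2 * N) with hcdef
  have hcpos : 0 < c := by positivity
  have hmb' := hδ₂ (-L) hLδ₂
  rw [← hμ, ← hσ2, hLabsneg] at hmb'
  have hmb := abs_le.mp hmb'
  have hΛb' := hδ₁ (-L) hLδ₁
  rw [← hμ, ← hσ2] at hΛb'
  have hΛb := abs_le.mp hΛb'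
  have hVb' := hδ₃ (-L) hLδ₃
  rw [← hσ2] at hVb'
  have hVb := abs_le.mp hVb'
  have hVle : V ≤ 2 * σ2 := by linarith [hVb.2]
  -- identities
  have hNL : σ2 * (N * L) = κ * a n := by
    rw [hLdef]; field_simp
  have hNL2 : N * L ^ 2 = 2 * κ ^ 2 * c / σ2 := by
    rw [hLdef, hcdef]; field_simp
  have hLR : L * R = κ * ε * c / 16 := by
    rw [hLdef, hRdef, hcdef]; field_simp; ring
  -- window condition
  have hwin : N * m + R ≤ N * μ - a n := by
    have h1 : m ≤ μ - σ2 * L + ε' * L := by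
      have := hmb.2
      nlinarith only [this]
    have h2 : N * m ≤ N * (μ - σ2 * L + ε' * L) :=
      mul_le_mul_of_nonneg_left h1 hNpos.le
    have h3 : N * (μ - σ2 * L + ε' * L)
        = N * μ - κ * a n + (ε/512) * (κ * a n) := by
      rw [show N * (μ - σ2 * L + ε' * L)
          = N * μ - σ2 * (N * L) + (ε/512) * (σ2 * (N * L)) by rw [hε'def]; ring, hNL]
    have h4 : N * μ - κ * a n + (ε/512) * (κ * a n) + R ≤ N * μ - a n := by
      rw [hRdef, hκdef]
      nlinarith only [han, hε0, hε1, mul_pos han hε0,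
        mul_nonneg (mul_nonneg han.le hε0.le) (sub_nonneg.mpr hε1.le)]
    linarith
  -- apply the tilt bound
  set A : Set Ω := {ω | pS X n ω < N * μ - a n} with hAdef
  have hA : MeasurableSet A := measurableSet_lt (meas_S hX n) measurable_const
  have hsub : ∀ ω, |pS X n ω - n * m| < R → ω ∈ A := by
    intro ω hω
    have := (abs_lt.mp hω).2
    simp only [hAdef, Set.mem_setOf_eq]
    have : pS X n ω < N * m + R := by
      rw [hNdef] at *
      linarith
    linarith [hwin]
  have htilt := tilt_lower_bound hX hiid hid hil0 hil1 hil2 hM n hR0 A hA hsub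
  -- Chebyshev factor
  have hq : (n:ℝ) * V / R ^ 2 ≤ 1/2 := by
    have h1 : N * V ≤ N * (2 * σ2) := mul_le_mul_of_nonneg_left hVle hNpos.le
    have h2 : N * V / R ^ 2 ≤ N * (2 * σ2) / R ^ 2 :=
      (div_le_div_iff_of_pos_right (by positivity : (0:ℝ) < R ^ 2)).mpr h1
    exact le_trans h2 hnq
  have h1mq : (1:ℝ)/2 ≤ 1 - (n:ℝ) * V / R ^ 2 := by linarith
  -- exponent estimate
  have hE : -(1 + ε) * c + 1
      ≤ N * Real.log (mgf (X 0) ℙ (-L)) - (-L) * (N * m) - |(-L)| * R := by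
    rw [hLabsneg]
    have k1 : N * (μ * (-L) + σ2 * L ^ 2 / 2 - ε' * L ^ 2)
        ≤ N * Real.log (mgf (X 0) ℙ (-L)) := by
      apply mul_le_mul_of_nonneg_left _ hNpos.le
      nlinarith only [hΛb.1]
    have k2 : N * (μ - σ2 * L - ε' * L) ≤ N * m := by
      apply mul_le_mul_of_nonneg_left _ hNpos.le
      nlinarith only [hmb.1]
    have k2' : L * (N * (μ - σ2 * L - ε' * L)) ≤ L * (N * m) :=
      mul_le_mul_of_nonneg_left k2 hL0.le
    have k3 : N * (μ * (-L) + σ2 * L ^ 2 / 2 - ε' * L ^ 2)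
          + L * (N * (μ - σ2 * L - ε' * L)) - L * R
        = -(σ2 * (N * L ^ 2)) / 2 - 2 * ε' * (N * L ^ 2) - L * R := by ring
    have k4 : -(σ2 * (N * L ^ 2)) / 2 - 2 * ε' * (N * L ^ 2) - L * R
        = -(κ ^ 2 * c) - (ε * κ ^ 2 * c) / 128 - κ * ε * c / 16 := by
      rw [hNL2, hLR, hε'def]; field_simp; ring
    have k5 : κ ^ 2 + ε * κ ^ 2 / 128 + κ * ε / 16 ≤ 1 + ε / 2 := by
      rw [hκdef]
      nlinarith only [sq_nonneg ε, hε0.le, hε1.le, hε0, hε1]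
    have k6 : (κ ^ 2 + ε * κ ^ 2 / 128 + κ * ε / 16) * c ≤ (1 + ε / 2) * c :=
      mul_le_mul_of_nonneg_right k5 hcpos.le
    have k7 : 1 ≤ (ε / 2) * c := by
      have h := hnc
      rw [div_le_iff₀ hε0] at h
      linarith only [h]
    have k8 : -(σ2 * (N * L ^ 2)) / 2 - 2 * ε' * (N * L ^ 2) - L * R
        = -((κ ^ 2 + ε * κ ^ 2 / 128 + κ * ε / 16) * c) := by
      rw [k4]; ring
    have k9 : N * Real.log (mgf (X 0) ℙ (-L)) - (-L) * (N * m)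
        = N * Real.log (mgf (X 0) ℙ (-L)) + L * (N * m) := by ring
    linarith only [k1, k2', k3, k6, k7, k8, k9]
  -- final chain
  calc Real.exp (-(1 + ε) * c)
      ≤ Real.exp ((N * Real.log (mgf (X 0) ℙ (-L)) - (-L) * (N * m) - |(-L)| * R) - 1) := by
        apply Real.exp_le_exp.mpr
        linarith
    _ = Real.exp (N * Real.log (mgf (X 0) ℙ (-L)) - (-L) * (N * m) - |(-L)| * R)
        * Real.exp (-1) := by
        rw [← Real.exp_add]; ring_nf
    _ ≤ Real.exp (N * Real.log (mgf (X 0) ℙ (-L)) - (-L) * (N * m) - |(-L)| * R)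
        * (1 - (n:ℝ) * V / R ^ 2) := by
        apply mul_le_mul_of_nonneg_left _ (Real.exp_pos _).le
        have hexp1 : Real.exp (-1 : ℝ) ≤ 1/2 := by
          rw [Real.exp_neg]
          rw [inv_le_comm₀ _ (by norm_num)]
          · calc (1/2 : ℝ)⁻¹ = 2 := by norm_num
              _ ≤ Real.exp 1 := by linarith [Real.add_one_le_exp 1]
          · exact Real.exp_pos 1
        linarith
    _ ≤ (ℙ A).toReal := by
        rw [hNdef] at *
        exact htilt

end main



end CramerAux

open CramerAux in
theorem cramer_large_deviations
    {Ω : Type*} [MeasureSpace Ω] [IsProbabilityMeasure (ℙ : Measure Ω)]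
    (X : ℕ → Ω → ℝ) (hX : ∀ i, Measurable (X i))
    (hiid : iIndepFun X ℙ)
    (hid : ∀ i, IdentDistrib (X i) (X 0) ℙ ℙ)
    (hpos : ∀ i, 0 ≤ᵐ[ℙ] X i)
    (hint : Integrable (X 0) ℙ)
    (μ : ℝ) (hμ : μ = ∫ ω, X 0 ω ∂ℙ)
    (σ2 : ℝ) (hσ2 : σ2 = variance (X 0) ℙ) (hσ2pos : 0 < σ2)
    (t : ℝ) (ht : 0 < t)
    (hexpmom : Integrable (fun ω => Real.exp (t * X 0 ω)) ℙ)
    (a : ℕ → ℝ) (hapos : ∀ n, 0 < a n)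
    (ha1 : Tendsto (fun n : ℕ => a n / (n : ℝ) ^ ((1 : ℝ) / 2)) atTop atTop)
    (ha2 : Tendsto (fun n : ℕ => a n / (n : ℝ)) atTop (𝓝 0)) :
    ∃ e₁ e₂ : ℕ → ℝ, Tendsto e₁ atTop (𝓝 0) ∧ Tendsto e₂ atTop (𝓝 0) ∧
      ∀ᶠ n : ℕ in atTop,
        (ℙ {ω | n * μ + a n < ∑ i ∈ Finset.range n, X i ω}).toReal
          = Real.exp (-(a n ^ 2 / (2 * σ2 * n)) * (1 + e₁ n)) ∧
        (ℙ {ω | ∑ i ∈ Finset.range n, X i ω < n * μ - a n}).toReal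
          = Real.exp (-(a n ^ 2 / (2 * σ2 * n)) * (1 + e₂ n)) := by
  set c : ℕ → ℝ := fun n => a n ^ 2 / (2 * σ2 * (n:ℝ)) with hcdef
  have hc : Tendsto c atTop atTop := c_tendsto hσ2pos hapos ha1
  set P₁ : ℕ → ℝ := fun n => (ℙ {ω | n * μ + a n < pS X n ω}).toReal with hP₁def
  set P₂ : ℕ → ℝ := fun n => (ℙ {ω | pS X n ω < n * μ - a n}).toReal with hP₂def
  have h₁ : ∀ ε : ℝ, 0 < ε → ε < 1 → ∀ᶠ n in atTop,
      Real.exp (-(1 + ε) * c n) ≤ P₁ n ∧ P₁ n ≤ Real.exp (-(1 - ε) * c n) := by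
    intro ε hε0 hε1
    filter_upwards [eventually_tilt_upper hX hiid hid hpos hμ hσ2 hσ2pos ht hexpmom
        hapos ha1 ha2 hε0 hε1,
      eventually_chernoff_upper hX hiid hid hpos hμ hσ2 hσ2pos ht hexpmom
        hapos ha1 ha2 hε0 hε1] with n hl hu
    exact ⟨hl, hu⟩
  have h₂ : ∀ ε : ℝ, 0 < ε → ε < 1 → ∀ᶠ n in atTop,
      Real.exp (-(1 + ε) * c n) ≤ P₂ n ∧ P₂ n ≤ Real.exp (-(1 - ε) * c n) := by
    intro ε hε0 hε1
    filter_upwards [eventually_tilt_lower hX hiid hid hpos hμ hσ2 hσ2pos ht hexpmom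
        hapos ha1 ha2 hε0 hε1,
      eventually_chernoff_lower hX hiid hid hpos hμ hσ2 hσ2pos ht hexpmom
        hapos ha1 ha2 hε0 hε1] with n hl hu
    exact ⟨hl, hu⟩
  obtain ⟨e₁, he₁, heq₁⟩ := exists_err P₁ c hc h₁
  obtain ⟨e₂, he₂, heq₂⟩ := exists_err P₂ c hc h₂
  refine ⟨e₁, e₂, he₁, he₂, ?_⟩
  filter_upwards [heq₁, heq₂] with n h1 h2
  exact ⟨h1, h2⟩
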